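/- In the setting of the construction of ϑ (category C with binary products, monad (T, η, μ), endofunctor I, indexed category Φ : Cᵒᵖ ⥤ PartOrd with left adjoints ∃_f ⊣ f⋆, bijections θ_{X,Y} : Hom_C(X, T Y) ≃ Φ(X ⨯ I Y) satisfying (A3.3a) and (A3.3b), endofunctor F with F ∘ I ≅ I ∘ F, predicate lifting σ : Φ ⟹ Φ ∘ F^{op}, relation lifting σ̃_{X,Y} := ∃_{λ_{X,Y}} ∘ σ_{X ⨯ I Y}, and ϑ_X := θ⁻¹(σ̃_{T X, X}(∈_X))), assume the Beck–Chevalley condition holds for the λ-squares: for every f : X → X' and every Y, (F f ⨯ 1_{I F Y})⋆ ∘ ∃_{λ_{X',Y}} = ∃_{λ_{X,Y}} ∘ (F(f ⨯ 1_{I Y}))⋆. Define the identity relation Δ_X := θ_{X,X}(η_X) ∈ Φ(X ⨯ I X). Then σ̃_{X,X}(Δ_X) = Δ_{F X} for all X if and only if ϑ is compatible with the unit of T, i.e. ϑ_X ∘ F(η_X) = η_{F X} for all X. -/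

import Mathlib

open CategoryTheory CategoryTheory.Limits Opposite

universe v u

variable {C : Type u} [Category.{v} C]

/-- Reindexing `f⋆ = Φ(f)` along `f` in an indexed category `Φ : Cᵒᵖ ⥤ PartOrd`. -/
def reindex (Φ : Cᵒᵖ ⥤ PartOrd.{v}) {X Y : C} (f : X ⟶ Y) :
    Φ.obj (op Y) →o Φ.obj (op X) :=
  (Φ.map f.op).hom

variable [HasBinaryProducts C]

/-- The map `λ_{X,Y} = ⟨F(pr₁), F(pr₂)⟩ : F(X ⨯ I Y) ⟶ F X ⨯ I F Y`
(using the isomorphism `F I ≅ I F`). -/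
noncomputable def lamMap (F I : C ⥤ C) (ε : I ⋙ F ≅ F ⋙ I) (X Y : C) :
    F.obj (X ⨯ I.obj Y) ⟶ F.obj X ⨯ I.obj (F.obj Y) :=
  prod.lift (F.map prod.fst) (F.map prod.snd ≫ ε.hom.app Y)

/-- The relation lifting `σ̃_{X,Y} = ∃_{λ_{X,Y}} ∘ σ_{X ⨯ I Y}`. -/
noncomputable def relLift (Φ : Cᵒᵖ ⥤ PartOrd.{v})
    (E : ∀ {X Y : C}, (X ⟶ Y) → (Φ.obj (op X) → Φ.obj (op Y)))
    (F I : C ⥤ C) (ε : I ⋙ F ≅ F ⋙ I) (σ : Φ ⟶ F.op ⋙ Φ) (X Y : C)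
    (R : Φ.obj (op (X ⨯ I.obj Y))) :
    Φ.obj (op (F.obj X ⨯ I.obj (F.obj Y))) :=
  E (lamMap F I ε X Y)
    ((show Φ.obj (op (X ⨯ I.obj Y)) →o Φ.obj (op (F.obj (X ⨯ I.obj Y))) from
      (σ.app (op (X ⨯ I.obj Y))).hom) R)

/-- The candidate Kl-law `ϑ_X = θ⁻¹(σ̃_{T X, X}(∈_X)) : F T X ⟶ T F X`. -/
noncomputable def klLawOfRelLift (T : Monad C) (I : C ⥤ C) (Φ : Cᵒᵖ ⥤ PartOrd.{v})
    (E : ∀ {X Y : C}, (X ⟶ Y) → (Φ.obj (op X) → Φ.obj (op Y)))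
    (θ : ∀ X Y : C, (X ⟶ T.obj Y) ≃ Φ.obj (op (X ⨯ I.obj Y)))
    (F : C ⥤ C) (ε : I ⋙ F ≅ F ⋙ I) (σ : Φ ⟶ F.op ⋙ Φ) (X : C) :
    F.obj (T.obj X) ⟶ T.obj (F.obj X) :=
  (θ (F.obj (T.obj X)) (F.obj X)).symm
    (relLift Φ E F I ε σ (T.obj X) X (θ (T.obj X) X (𝟙 (T.obj X))))

/-- Assuming the Beck–Chevalley condition for the `λ`-squares, the relation
lifting `σ̃` preserves the identity relation `Δ_X = θ(η_X)` if and only if the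
natural transformation `ϑ` is compatible with the unit of the monad `T`. -/
theorem klLawOfRelLift_unit_compatible
    (T : Monad C) (I : C ⥤ C) (Φ : Cᵒᵖ ⥤ PartOrd.{v})
    (E : ∀ {X Y : C}, (X ⟶ Y) → (Φ.obj (op X) → Φ.obj (op Y)))
    (hE : ∀ {X Y : C} (f : X ⟶ Y), GaloisConnection (E f) (reindex Φ f))
    (θ : ∀ X Y : C, (X ⟶ T.obj Y) ≃ Φ.obj (op (X ⨯ I.obj Y)))
    (hθa : ∀ {X X' Y : C} (f : X ⟶ X') (h : X' ⟶ T.obj Y),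
      θ X Y (f ≫ h) = reindex Φ (prod.map f (𝟙 (I.obj Y))) (θ X' Y h))
    (hθb : ∀ {X Y Y' : C} (g : Y ⟶ Y') (h : X ⟶ T.obj Y),
      θ X Y' (h ≫ T.map g) = E (prod.map (𝟙 X) (I.map g)) (θ X Y h))
    (F : C ⥤ C) (ε : I ⋙ F ≅ F ⋙ I) (σ : Φ ⟶ F.op ⋙ Φ)
    (hBC : ∀ {X X' : C} (f : X ⟶ X') (Y : C)
      (R : Φ.obj (op (F.obj (X' ⨯ I.obj Y)))),
      reindex Φ (prod.map (F.map f) (𝟙 (I.obj (F.obj Y))))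
          (E (lamMap F I ε X' Y) R) =
        E (lamMap F I ε X Y)
          (reindex Φ (F.map (prod.map f (𝟙 (I.obj Y)))) R)) :
    (∀ X : C, relLift Φ E F I ε σ X X (θ X X (T.η.app X)) =
        θ (F.obj X) (F.obj X) (T.η.app (F.obj X))) ↔
      (∀ X : C, F.map (T.η.app X) ≫ klLawOfRelLift T I Φ E θ F ε σ X =
        T.η.app (F.obj X)) := by
  have key : ∀ X : C,
      θ (F.obj X) (F.obj X) (F.map (T.η.app X) ≫ klLawOfRelLift T I Φ E θ F ε σ X) =
        relLift Φ E F I ε σ X X (θ X X (T.η.app X)) := by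
    intro X
    rw [hθa, klLawOfRelLift, Equiv.apply_symm_apply]
    unfold relLift
    rw [hBC]
    have hnat := congrArg
      (fun g : Φ.obj (op (T.obj X ⨯ I.obj X)) ⟶ Φ.obj (op (F.obj (X ⨯ I.obj X))) =>
        (show Φ.obj (op (T.obj X ⨯ I.obj X)) →o Φ.obj (op (F.obj (X ⨯ I.obj X))) from g.hom)
          (θ (T.obj X) X (𝟙 (T.obj X))))
      (σ.naturality (prod.map (T.η.app X) (𝟙 (I.obj X))).op)
    dsimp at hnat
    have hre : reindex Φ (prod.map (T.η.app X) (𝟙 (I.obj X)))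
        (θ (T.obj X) X (𝟙 (T.obj X))) = θ X X (T.η.app X) := by
      rw [← hθa, Category.comp_id]
      rfl
    refine congrArg (E (lamMap F I ε X X)) ?_
    refine hnat.symm.trans ?_
    exact congrArg _ hre
  constructor
  · intro h X
    exact (θ (F.obj X) (F.obj X)).injective ((key X).trans (h X))
  · intro h X
    rw [← key X, h X]
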